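/- (Russian formula) With A a g-valued 1-form, v the ghost, F = dA + A², and the BRS operator δ given by δA = -dv - [A,v], δv = -v², one has (d+δ)(A+v) + (A+v)² = F. -/
import Mathlib


/-- The Russian formula: `(d+δ)(A+v) + (A+v)² = F` where `F = dA + A²`,
`δA = -dv - [A,v]`, `δv = -v²` (graded commutator w.r.t. total degree,
both `A` and `v` being odd). -/
theorem russian_formula {Ω : Type*} [Ring Ω] (d δ : Ω →+ Ω) (A v : Ω)
    (hδA : δ A = -(d v) - (A * v + v * A))
    (hδv : δ v = -(v * v)) :
    (d (A + v) + δ (A + v)) + (A + v) * (A + v) = d A + A * A := by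
  simp [map_add, hδA, hδv, mul_add, add_mul]
  abel
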